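/- Let λ² be an eigenvalue of H = -d²/dx² + x² with normalized eigenfunction h, and let δ' ≥ 0. Then ‖(1+|x|)·ln^{-δ'}(2+|x|)·h(x)‖_{L²(ℝ)} ≤ C·λ/ln^{δ'}(2+λ) for a constant C independent of λ. -/

import Mathlib

open MeasureTheory Filter
open scoped ContDiff


lemma weightA (δ' : ℝ) (hδ' : 0 ≤ δ') :
    ∃ C : ℝ, 1 ≤ C ∧ ∀ lam : ℝ, 1 ≤ lam → ∀ x : ℝ,
      (1+|x|) / (Real.log (2+|x|)) ^ δ' ≤ C * (1+lam+|x|) / (Real.log (2+lam)) ^ δ' := by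
  set n : ℕ := ⌈δ'⌉₊ + 1 with hn
  have hn1 : (1:ℝ) ≤ n := by exact_mod_cast Nat.one_le_iff_ne_zero.mpr (by omega)
  have hδn : δ' ≤ n := by
    calc δ' ≤ ⌈δ'⌉₊ := Nat.le_ceil δ'
    _ ≤ n := by exact_mod_cast Nat.le_succ _
  set m : ℝ := n / Real.log 2 with hm
  have hlog2 : 0 < Real.log 2 := Real.log_pos (by norm_num)
  have hlog2' : Real.log 2 < 1 := by
    nlinarith [Real.log_two_lt_d9]
  have hm1 : 1 ≤ m := by
    rw [hm, le_div_iff₀ hlog2]; nlinarith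
  have hmn : 1 ≤ m ^ n := one_le_pow₀ hm1
  have hmeq : Real.log 2 * m = (n:ℝ) := by rw [hm]; field_simp
  clear_value m
  clear hm
  clear_value n
  clear hn
  refine ⟨2 * m ^ n, by nlinarith, ?_⟩
  intro lam hlam x
  set t : ℝ := |x| with ht
  have ht0 : 0 ≤ t := abs_nonneg x
  set a : ℝ := Real.log (2 + t) with ha
  set b : ℝ := Real.log (2 + lam) with hb
  have ha2 : Real.log 2 ≤ a := Real.log_le_log (by norm_num) (by linarith)
  have ha0 : 0 < a := lt_of_lt_of_le hlog2 ha2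
  have hb1 : 1 ≤ b := by
    rw [hb, Real.le_log_iff_exp_le (by linarith)]
    nlinarith [Real.exp_one_lt_d9]
  have hb0 : 0 < b := by linarith
  have hbpow : (0:ℝ) < b ^ δ' := Real.rpow_pos_of_pos hb0 δ'
  have hapow : (0:ℝ) < a ^ δ' := Real.rpow_pos_of_pos ha0 δ'
  rcases le_total lam t with hc | hc
  · -- case lam ≤ t : b ≤ a
    have hba : b ≤ a := Real.log_le_log (by linarith) (by linarith)
    have : b ^ δ' ≤ a ^ δ' := Real.rpow_le_rpow (le_of_lt hb0) hba hδ'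
    rw [div_le_div_iff₀ hapow hbpow]
    calc (1+t) * b ^ δ' ≤ (2 * m ^ n * (1 + lam + t)) * b ^ δ' := by
          apply mul_le_mul_of_nonneg_right _ hbpow.le; nlinarith
    _ ≤ (2 * m ^ n * (1 + lam + t)) * a ^ δ' := by
        apply mul_le_mul_of_nonneg_left this; nlinarith
  · -- case t ≤ lam : a ≤ b
    have hab : a ≤ b := Real.log_le_log (by linarith) (by linarith)
    set u : ℝ := b - a with hu
    have hu0 : 0 ≤ u := by linarith
    have h1 : 1 + t ≤ Real.exp a := by
      rw [ha, Real.exp_log (by linarith)]; linarith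
    have h2 : Real.exp b ≤ 2 * (1 + lam) := by
      rw [hb, Real.exp_log (by linarith)]; linarith
    have h3 : b ≤ a * (m * (1 + u / n)) := by
      have hmn' : a * m / n ≥ 1 := by
        rw [ge_iff_le, le_div_iff₀ (by linarith : (0:ℝ) < (n:ℝ))]
        nlinarith [mul_le_mul_of_nonneg_right ha2 (le_trans zero_le_one hm1)]
      have : a * (m * (1 + u / n)) = a * m + (a * m / n) * u := by ring
      nlinarith
    have h4 : b ^ δ' ≤ a ^ δ' * (m * (1 + u / n)) ^ δ' := by
      rw [← Real.mul_rpow (le_of_lt ha0) (by positivity)]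
      exact Real.rpow_le_rpow (le_of_lt hb0) h3 hδ'
    have h5 : (m * (1 + u / n)) ^ δ' ≤ (m * (1 + u / n)) ^ (n:ℝ) := by
      apply Real.rpow_le_rpow_of_exponent_le _ hδn
      nlinarith [div_nonneg hu0 (by linarith : (0:ℝ) ≤ n)]
    have h6 : (m * (1 + u / n)) ^ (n:ℝ) = m ^ n * (1 + u / n) ^ n := by
      rw [Real.rpow_natCast, mul_pow]
    have h7 : (1 + u / n) ^ n ≤ Real.exp u := by
      have : (1 + u / n) ≤ Real.exp (u / n) := by
        have := Real.add_one_le_exp (u / n); linarith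
      calc (1 + u / n) ^ n ≤ (Real.exp (u / n)) ^ n := by
            apply pow_le_pow_left₀ (by positivity) this
      _ = Real.exp u := by
            rw [← Real.exp_nat_mul]
            congr 1
            field_simp
    have key : (1 + t) * b ^ δ' ≤ 2 * m ^ n * (1 + lam) * a ^ δ' := by
      have c1 : (1 + t) * b ^ δ' ≤ Real.exp a * (a ^ δ' * (m ^ n * Real.exp u)) := by
        have : b ^ δ' ≤ a ^ δ' * (m ^ n * Real.exp u) := by
          calc b ^ δ' ≤ a ^ δ' * (m * (1 + u / n)) ^ δ' := h4
          _ ≤ a ^ δ' * (m ^ n * (1 + u/n) ^ n) := by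
              rw [← h6]; exact mul_le_mul_of_nonneg_left h5 (le_of_lt hapow)
          _ ≤ a ^ δ' * (m ^ n * Real.exp u) := by
              apply mul_le_mul_of_nonneg_left _ (le_of_lt hapow)
              exact mul_le_mul_of_nonneg_left h7 (by positivity)
        apply mul_le_mul h1 this (by positivity) (by positivity)
      have c2 : Real.exp a * (a ^ δ' * (m ^ n * Real.exp u)) = m ^ n * a ^ δ' * Real.exp b := by
        rw [show b = a + u by rw [hu]; ring, Real.exp_add]; ring
      calc (1 + t) * b ^ δ' ≤ m ^ n * a ^ δ' * Real.exp b := by rw [← c2]; exact c1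
      _ ≤ m ^ n * a ^ δ' * (2 * (1 + lam)) := by
          apply mul_le_mul_of_nonneg_left h2; positivity
      _ = 2 * m ^ n * (1 + lam) * a ^ δ' := by ring
    rw [div_le_div_iff₀ hapow hbpow]
    refine le_trans key ?_
    apply mul_le_mul_of_nonneg_right _ hapow.le
    have h8 : (0:ℝ) ≤ 2 * m ^ n := by positivity
    have h9 : (1+lam) ≤ 1+lam+t := by linarith
    exact mul_le_mul_of_nonneg_left h9 h8



lemma cutoff : ∃ χ : ℝ → ℝ, Differentiable ℝ χ ∧ Differentiable ℝ (deriv χ) ∧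
    Continuous (deriv (deriv χ)) ∧ (∀ x : ℝ, |x| ≤ 1 → χ x = 1) ∧
    (∀ x : ℝ, 2 ≤ |x| → χ x = 0) ∧ (∀ x, 0 ≤ χ x) ∧ (∀ x, χ x ≤ 1) ∧
    (∀ x : ℝ, 2 < |x| → deriv χ x = 0) ∧
    ∃ M : ℝ, 0 ≤ M ∧ ∀ x, |deriv (deriv χ) x| ≤ M := by
  set f : ContDiffBump (0:ℝ) := ⟨1, 2, one_pos, one_lt_two⟩ with hf
  have h0 : ContDiff ℝ ∞ (⇑f : ℝ → ℝ) := f.contDiff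
  have h1 : ContDiff ℝ ∞ (deriv (⇑f : ℝ → ℝ)) := (contDiff_infty_iff_deriv.mp h0).2
  have h2 : ContDiff ℝ ∞ (deriv (deriv (⇑f : ℝ → ℝ))) := (contDiff_infty_iff_deriv.mp h1).2
  have hzero : ∀ x : ℝ, 2 ≤ |x| → (⇑f : ℝ → ℝ) x = 0 := by
    intro x hx
    by_contra hne
    have hmem : x ∈ Function.support (⇑f : ℝ → ℝ) := hne
    rw [f.support_eq] at hmem
    simp only [Metric.mem_ball, Real.dist_eq, sub_zero] at hmem
    exact absurd hmem (not_lt.mpr (by simpa using hx))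
  refine ⟨⇑f, (contDiff_infty_iff_deriv.mp h0).1, (contDiff_infty_iff_deriv.mp h1).1,
    h2.continuous, ?_, hzero, fun x => f.nonneg, fun x => f.le_one, ?_, ?_⟩
  · intro x hx
    exact f.one_of_mem_closedBall (by simpa [Metric.mem_closedBall, Real.dist_eq] using hx)
  · intro x hx
    have hev : (⇑f : ℝ → ℝ) =ᶠ[nhds x] (fun _ => 0) := by
      have hop : IsOpen {y : ℝ | 2 < |y|} := by
        have heq : {y : ℝ | 2 < |y|} = (fun y : ℝ => |y|) ⁻¹' Set.Ioi 2 := rfl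
        rw [heq]; exact isOpen_Ioi.preimage continuous_abs
      filter_upwards [hop.mem_nhds hx] with y hy
      exact hzero y (le_of_lt hy)
    rw [hev.deriv_eq, deriv_const]
  · have hcs : HasCompactSupport (deriv (deriv (⇑f : ℝ → ℝ))) :=
      f.hasCompactSupport.deriv.deriv
    obtain ⟨M, hM⟩ := hcs.exists_bound_of_continuous h2.continuous
    refine ⟨M, le_trans (abs_nonneg _) (by simpa using hM 0), fun x => by simpa using hM x⟩

lemma energy : ∃ K : ℝ, 0 ≤ K ∧ ∀ (lam : ℝ) (h : ℝ → ℝ), ContDiff ℝ 2 h →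
    (∀ x : ℝ, -(deriv (deriv h) x) + x^2 * h x = lam^2 * h x) →
    Integrable (fun x => (h x)^2) → (∫ x, (h x)^2) = 1 →
    ∀ R : ℝ, 1 ≤ R → (∫ x in (-R)..R, x^2 * (h x)^2) ≤ lam^2 + K := by
  obtain ⟨χ, χd, χd1, χc2, χone, χzero, χpos, χle1, χdzero, M, hM0, hMb⟩ := cutoff
  refine ⟨M/2, by linarith, ?_⟩
  intro lam h hh hode hint hnorm R hR
  have hR0 : (0:ℝ) < R := by linarith
  -- regularity of h
  have hcont : Continuous h := hh.continuous
  have hd1 : Differentiable ℝ h := hh.differentiable two_ne_zero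
  have hh' : ∀ x, HasDerivAt h (deriv h x) x := fun x => (hd1 x).hasDerivAt
  have hh2 : ContDiff ℝ 1 (deriv h) := by
    have : ContDiff ℝ (1+1 : ℕ) h := by exact_mod_cast hh
    exact ((contDiff_succ_iff_deriv (n := 1)).mp (by exact_mod_cast this)).2.2
  have h'cont : Continuous (deriv h) := hh2.continuous
  have hd2 : Differentiable ℝ (deriv h) := hh2.differentiable one_ne_zero
  have hh'' : ∀ x, HasDerivAt (deriv h) (deriv (deriv h) x) x := fun x => (hd2 x).hasDerivAt
  have h''cont : Continuous (deriv (deriv h)) := hh2.continuous_deriv le_rfl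
  -- cutoff at scale R
  set φ : ℝ → ℝ := fun x => χ (x * R⁻¹) with hφdef
  set φ' : ℝ → ℝ := fun x => deriv χ (x * R⁻¹) * R⁻¹ with hφ'def
  set φ'' : ℝ → ℝ := fun x => deriv (deriv χ) (x * R⁻¹) * R⁻¹ * R⁻¹ with hφ''def
  have hinner : ∀ x : ℝ, HasDerivAt (fun y : ℝ => y * R⁻¹) R⁻¹ x := fun x => hasDerivAt_mul_const _
  have hφ : ∀ x, HasDerivAt φ (φ' x) x := fun x => ((χd _).hasDerivAt).comp x (hinner x)
  have hφ' : ∀ x, HasDerivAt φ' (φ'' x) x :=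
    fun x => (((χd1 _).hasDerivAt).comp x (hinner x)).mul_const R⁻¹
  have φcont : Continuous φ := χd.continuous.comp (continuous_id.mul continuous_const)
  have φ'cont : Continuous φ' :=
    (χd1.continuous.comp (continuous_id.mul continuous_const)).mul continuous_const
  have φ''cont : Continuous φ'' :=
    ((χc2.comp (continuous_id.mul continuous_const)).mul continuous_const).mul continuous_const
  have φnonneg : ∀ x, 0 ≤ φ x := fun x => χpos _
  have φle1 : ∀ x, φ x ≤ 1 := fun x => χle1 _
  set s : ℝ := 3*R with hs
  have hss : -s ≤ s := by linarith
  -- boundary values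
  have h3R : (3*R) * R⁻¹ = 3 := by field_simp
  have h3R' : (-(3*R)) * R⁻¹ = -3 := by field_simp
  have hφb : φ s = 0 := by rw [hφdef]; simp only [hs, h3R]; exact χzero 3 (by norm_num)
  have hφa : φ (-s) = 0 := by
    rw [hφdef]; simp only [hs, h3R']; exact χzero (-3) (by rw [abs_neg]; norm_num)
  have hφ'b : φ' s = 0 := by
    rw [hφ'def]; simp only [hs, h3R]; rw [χdzero 3 (by norm_num)]; ring
  have hφ'a : φ' (-s) = 0 := by
    rw [hφ'def]; simp only [hs, h3R']
    rw [χdzero (-3) (by rw [abs_neg]; norm_num)]; ring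
  have φone : ∀ x : ℝ, |x| ≤ R → φ x = 1 := by
    intro x hx1
    have hxx : |x * R⁻¹| ≤ 1 := by
      rw [abs_mul, abs_of_nonneg (by positivity : (0:ℝ) ≤ R⁻¹)]
      rw [← le_div_iff₀ (by positivity : (0:ℝ) < R⁻¹)]
      simpa [one_div, inv_inv] using hx1
    rw [hφdef]
    simp only
    rw [χone _ hxx]
  have hφ''b : ∀ x, |φ'' x| ≤ M := by
    intro x
    rw [hφ''def]
    simp only
    rw [abs_mul, abs_mul]
    have hRinv : |R⁻¹| ≤ 1 := by
      rw [abs_of_nonneg (by positivity : (0:ℝ) ≤ R⁻¹)]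
      rw [inv_le_one_iff₀]; right; linarith
    have hA := hMb (x * R⁻¹)
    have e1 : |deriv (deriv χ) (x * R⁻¹)| * |R⁻¹| ≤ M * 1 :=
      mul_le_mul hA hRinv (abs_nonneg _) hM0
    have e2 : (|deriv (deriv χ) (x * R⁻¹)| * |R⁻¹|) * |R⁻¹| ≤ (M * 1) * 1 :=
      mul_le_mul e1 hRinv (abs_nonneg _) (by nlinarith)
    linarith
  have hRs : R ≤ s := by rw [hs]; linarith
  clear_value φ φ' φ'' s
  clear hφdef hφ'def hφ''def hs h3R h3R' hinner χd χd1 χc2 χone χzero χpos χle1 χdzero hMb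
  -- interval integrability
  have ii : ∀ g : ℝ → ℝ, Continuous g → IntervalIntegrable g volume (-s) s :=
    fun g hg => hg.intervalIntegrable _ _
  -- step 1 : pointwise identity
  have eq1 : ∀ x : ℝ, x^2 * (φ x * h x^2) =
      lam^2 * (φ x * h x^2) + (φ x * h x) * deriv (deriv h) x := by
    intro x
    linear_combination (φ x * h x) * hode x
  -- integrability
  have ih2 : IntervalIntegrable (fun x => h x^2) volume (-s) s := ii _ (hcont.pow 2)
  have i1 : IntervalIntegrable (fun x => φ x * h x^2) volume (-s) s :=
    ii _ (φcont.mul (hcont.pow 2))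
  have i2 : IntervalIntegrable (fun x => (φ x * h x) * deriv (deriv h) x) volume (-s) s :=
    ii _ ((φcont.mul hcont).mul h''cont)
  -- step 1
  have I1 : (∫ x in (-s)..s, x^2 * (φ x * h x^2)) =
      lam^2 * (∫ x in (-s)..s, φ x * h x^2)
        + ∫ x in (-s)..s, (φ x * h x) * deriv (deriv h) x := by
    rw [show (fun x : ℝ => x^2 * (φ x * h x^2))
        = fun x => lam^2 * (φ x * h x^2) + (φ x * h x) * deriv (deriv h) x from funext eq1]
    rw [intervalIntegral.integral_add (i1.const_mul _) i2, intervalIntegral.integral_const_mul]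
  -- integration by parts 1
  have u'eq : ∀ x, HasDerivAt (fun y => φ y * h y) (φ' x * h x + φ x * deriv h x) x :=
    fun x => (hφ x).mul (hh' x)
  have ibp1 : (∫ x in (-s)..s, (φ x * h x) * deriv (deriv h) x)
      = - ∫ x in (-s)..s, (φ' x * h x + φ x * deriv h x) * deriv h x := by
    rw [intervalIntegral.integral_mul_deriv_eq_deriv_mul
      (fun x _ => u'eq x) (fun x _ => hh'' x)
      (ii _ ((φ'cont.mul hcont).add (φcont.mul h'cont))) (ii _ h''cont)]
    rw [hφb, hφa]; ring
  -- integration by parts 2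
  have hv : ∀ x, HasDerivAt (fun y => h y * h y / 2) (h x * deriv h x) x := by
    intro x
    have h2 := ((hh' x).mul (hh' x)).div_const 2
    simp only [Pi.mul_apply] at h2
    exact h2.congr_deriv (by ring)
  have ibp2 : (∫ x in (-s)..s, φ' x * (h x * deriv h x))
      = - ∫ x in (-s)..s, φ'' x * (h x * h x / 2) := by
    rw [intervalIntegral.integral_mul_deriv_eq_deriv_mul
      (fun x _ => hφ' x) (fun x _ => hv x) (ii _ φ''cont) (ii _ (hcont.mul h'cont))]
    rw [hφ'b, hφ'a]; ring
  -- expand the cross term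
  have cross : (∫ x in (-s)..s, (φ' x * h x + φ x * deriv h x) * deriv h x)
      = (∫ x in (-s)..s, φ' x * (h x * deriv h x))
        + ∫ x in (-s)..s, φ x * (deriv h x)^2 := by
    rw [show (fun x : ℝ => (φ' x * h x + φ x * deriv h x) * deriv h x)
        = fun x => φ' x * (h x * deriv h x) + φ x * (deriv h x)^2 from funext (by intro x; ring)]
    rw [intervalIntegral.integral_add (ii (fun x => φ' x * (h x * deriv h x)) (φ'cont.mul (hcont.mul h'cont)))
      (ii (fun x => φ x * (deriv h x)^2) (φcont.mul (h'cont.pow 2)))]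
  -- main identity
  have ident : (∫ x in (-s)..s, x^2 * (φ x * h x^2)) =
      lam^2 * (∫ x in (-s)..s, φ x * h x^2)
        + (∫ x in (-s)..s, φ'' x * (h x * h x / 2))
        - ∫ x in (-s)..s, φ x * (deriv h x)^2 := by
    rw [I1, ibp1, cross, ibp2]; ring
  -- bounds
  have hsint : (∫ x in (-s)..s, h x^2) ≤ 1 := by
    rw [intervalIntegral.integral_of_le hss, ← hnorm]
    exact setIntegral_le_integral hint (ae_of_all _ fun x => sq_nonneg _)
  have bnd0 : (∫ x in (-s)..s, φ x * h x^2) ≤ 1 := by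
    refine le_trans ?_ hsint
    apply intervalIntegral.integral_mono_on hss i1 ih2
    intro x _
    nlinarith [φnonneg x, φle1 x, sq_nonneg (h x)]
  have bnd0' : 0 ≤ (∫ x in (-s)..s, φ x * h x^2) :=
    intervalIntegral.integral_nonneg hss
      (fun x _ => mul_nonneg (φnonneg x) (sq_nonneg _))
  have bnd1 : lam^2 * (∫ x in (-s)..s, φ x * h x^2) ≤ lam^2 := by
    nlinarith [sq_nonneg lam]
  have bnd2 : (∫ x in (-s)..s, φ'' x * (h x * h x / 2)) ≤ M/2 := by
    have step : (∫ x in (-s)..s, φ'' x * (h x * h x / 2))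
        ≤ ∫ x in (-s)..s, (M/2) * h x^2 := by
      apply intervalIntegral.integral_mono_on hss (ii _ (φ''cont.mul ((hcont.mul hcont).div_const 2)))
        (ii _ (continuous_const.mul (hcont.pow 2)))
      intro x _
      simp only [Pi.mul_apply, Pi.pow_apply]
      nlinarith [abs_le.mp (hφ''b x), sq_nonneg (h x)]
    rw [intervalIntegral.integral_const_mul] at step
    nlinarith
  have bnd3 : 0 ≤ ∫ x in (-s)..s, φ x * (deriv h x)^2 :=
    intervalIntegral.integral_nonneg hss
      (fun x _ => mul_nonneg (φnonneg x) (sq_nonneg _))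
  -- left-hand side
  have lhs1 : (∫ x in (-R)..R, x^2 * h x^2) = ∫ x in (-R)..R, x^2 * (φ x * h x^2) := by
    apply intervalIntegral.integral_congr
    intro x hx
    rw [Set.uIcc_of_le (by linarith : -R ≤ R)] at hx
    have hx1 : |x| ≤ R := abs_le.mpr ⟨hx.1, hx.2⟩
    show x ^ 2 * h x ^ 2 = x ^ 2 * (φ x * h x ^ 2)
    rw [φone x hx1]
    ring
  have lhs2 : (∫ x in (-R)..R, x^2 * (φ x * h x^2)) ≤ ∫ x in (-s)..s, x^2 * (φ x * h x^2) := by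
    apply intervalIntegral.integral_mono_interval (by linarith : -s ≤ -R)
      (by linarith : -R ≤ R) hRs
    · exact ae_of_all _ fun x => mul_nonneg (sq_nonneg x) (mul_nonneg (φnonneg x) (sq_nonneg _))
    · exact ii _ ((continuous_pow 2).mul (φcont.mul (hcont.pow 2)))
  calc (∫ x in (-R)..R, x^2 * h x^2) ≤ ∫ x in (-s)..s, x^2 * (φ x * h x^2) := by
        rw [lhs1]; exact lhs2
  _ ≤ lam^2 + M/2 := by rw [ident]; linarith

/-- Logarithmically weighted `L²` bound for Hermite eigenfunctions: for `δ' ≥ 0` there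
is `C > 0` (independent of `λ`) such that if `h` is an `L²`-normalized eigenfunction of
the harmonic oscillator `-d²/dx² + x²` with eigenvalue `λ² ≥ 1`, then
`‖(1+|x|) ln^{-δ'}(2+|x|) h‖_{L²(ℝ)} ≤ C λ / ln^{δ'}(2+λ)`. -/
theorem stmt19 (δ' : ℝ) (hδ' : 0 ≤ δ') :
    ∃ C : ℝ, 0 < C ∧ ∀ lam : ℝ, 1 ≤ lam → ∀ h : ℝ → ℝ, ContDiff ℝ 2 h →
      (∀ x, -(deriv (deriv h) x) + x^2 * h x = lam^2 * h x) →
      Integrable (fun x => (h x)^2) →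
      (∫ x, (h x)^2) = 1 →
      (∫ x, ((1+|x|) / (Real.log (2+|x|)) ^ δ' * h x)^2)
        ≤ (C * lam / (Real.log (2+lam)) ^ δ')^2 := by
  obtain ⟨C₁, hC₁, hWA⟩ := weightA δ' hδ'
  obtain ⟨K, hK0, hE⟩ := energy
  refine ⟨C₁ * (K+4), by nlinarith, ?_⟩
  intro lam hlam h hh hode hint hnorm
  set L : ℝ := (Real.log (2+lam)) ^ δ' with hLdef
  have hlog : (0:ℝ) < Real.log (2+lam) := Real.log_pos (by linarith)
  have hL0 : 0 < L := Real.rpow_pos_of_pos hlog δ'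
  have hcont : Continuous h := hh.continuous
  have hbound := hE lam h hh hode hint hnorm
  -- integrability of x^2 h^2
  have hc2 : Continuous (fun x : ℝ => x^2 * h x^2) := (continuous_pow 2).mul (hcont.pow 2)
  have hta : Tendsto (fun n : ℕ => -((n:ℝ)+1)) atTop atBot :=
    tendsto_neg_atBot_iff.mpr (tendsto_atTop_add_const_right _ 1 tendsto_natCast_atTop_atTop)
  have htb : Tendsto (fun n : ℕ => ((n:ℝ)+1)) atTop atTop :=
    tendsto_atTop_add_const_right _ 1 tendsto_natCast_atTop_atTop
  have hnormint : ∀ n : ℕ, (∫ x in (-((n:ℝ)+1))..((n:ℝ)+1), ‖x^2 * h x^2‖) ≤ lam^2 + K := by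
    intro n
    have : (∫ x in (-((n:ℝ)+1))..((n:ℝ)+1), ‖x^2 * h x^2‖)
        = ∫ x in (-((n:ℝ)+1))..((n:ℝ)+1), x^2 * h x^2 := by
      apply intervalIntegral.integral_congr
      intro x _
      simp only [Real.norm_eq_abs]
      rw [abs_of_nonneg (by positivity)]
    rw [this]
    exact hbound ((n:ℝ)+1) (le_add_of_nonneg_left (Nat.cast_nonneg n))
  have hI2 : Integrable (fun x : ℝ => x^2 * h x^2) := by
    apply integrable_of_intervalIntegral_norm_bounded (lam^2 + K)
      (fun n : ℕ => hc2.integrableOn_Ioc) hta htb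
    exact Eventually.of_forall hnormint
  have hI2val : (∫ x : ℝ, x^2 * h x^2) ≤ lam^2 + K := by
    have ht := intervalIntegral_tendsto_integral hI2 hta htb
    exact le_of_tendsto ht (Eventually.of_forall fun n => hbound _ (le_add_of_nonneg_left (Nat.cast_nonneg n)))
  -- pointwise domination
  have hw : ∀ x : ℝ, ((1+|x|) / (Real.log (2+|x|)) ^ δ' * h x)^2
      ≤ (C₁/L)^2 * (2*(1+lam)^2 * h x^2 + 2*(x^2 * h x^2)) := by
    intro x
    have hwn : 0 ≤ (1+|x|) / (Real.log (2+|x|)) ^ δ' := by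
      apply div_nonneg (by positivity)
      exact (Real.rpow_pos_of_pos (Real.log_pos (by nlinarith [abs_nonneg x])) δ').le
    have h1 := hWA lam hlam x
    have h2 : ((1+|x|) / (Real.log (2+|x|)) ^ δ')^2 ≤ (C₁ * (1+lam+|x|) / L)^2 :=
      pow_le_pow_left₀ hwn h1 2
    have h3 : ((1+|x|) / (Real.log (2+|x|)) ^ δ' * h x)^2
        = ((1+|x|) / (Real.log (2+|x|)) ^ δ')^2 * h x^2 := by ring
    have h4 : (C₁ * (1+lam+|x|) / L)^2 = (C₁/L)^2 * (1+lam+|x|)^2 := by ring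
    have h5 : (1+lam+|x|)^2 ≤ 2*(1+lam)^2 + 2*x^2 := by
      nlinarith [sq_abs x, sq_nonneg (1+lam-|x|)]
    rw [h3]
    calc ((1+|x|) / (Real.log (2+|x|)) ^ δ')^2 * h x^2
        ≤ (C₁ * (1+lam+|x|) / L)^2 * h x^2 :=
          mul_le_mul_of_nonneg_right h2 (sq_nonneg _)
    _ = (C₁/L)^2 * ((1+lam+|x|)^2 * h x^2) := by rw [h4]; ring
    _ ≤ (C₁/L)^2 * ((2*(1+lam)^2 + 2*x^2) * h x^2) := by
          apply mul_le_mul_of_nonneg_left _ (sq_nonneg _)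
          exact mul_le_mul_of_nonneg_right h5 (sq_nonneg _)
    _ = (C₁/L)^2 * (2*(1+lam)^2 * h x^2 + 2*(x^2 * h x^2)) := by ring
  -- integrable majorant
  have hGinner : Integrable (fun x : ℝ => 2*(1+lam)^2 * h x^2 + 2*(x^2 * h x^2)) :=
    (hint.const_mul _).add (hI2.const_mul 2)
  have hG : Integrable (fun x : ℝ => (C₁/L)^2 * (2*(1+lam)^2 * h x^2 + 2*(x^2 * h x^2))) :=
    hGinner.const_mul _
  have hfcont : Continuous (fun x : ℝ => ((1+|x|) / (Real.log (2+|x|)) ^ δ' * h x)^2) := by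
    have c1 : Continuous (fun x : ℝ => 1+|x|) := continuous_const.add continuous_abs
    have cl : Continuous (fun x : ℝ => Real.log (2+|x|)) := by
      apply Continuous.log (continuous_const.add continuous_abs)
      intro x; show (2:ℝ) + |x| ≠ 0; nlinarith [abs_nonneg x]
    have c2 : Continuous (fun x : ℝ => (Real.log (2+|x|)) ^ δ') :=
      cl.rpow_const (fun x => Or.inr hδ')
    have c3 : Continuous (fun x : ℝ => (1+|x|) / (Real.log (2+|x|)) ^ δ') := by
      apply c1.div c2
      intro x
      exact (Real.rpow_pos_of_pos (Real.log_pos (by nlinarith [abs_nonneg x])) δ').ne'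
    exact (c3.mul hcont).pow 2
  have hfint : Integrable (fun x : ℝ => ((1+|x|) / (Real.log (2+|x|)) ^ δ' * h x)^2) := by
    apply hG.mono' hfcont.aestronglyMeasurable
    apply ae_of_all
    intro x
    rw [Real.norm_eq_abs, abs_of_nonneg (sq_nonneg _)]
    exact hw x
  have step1 : (∫ x, ((1+|x|) / (Real.log (2+|x|)) ^ δ' * h x)^2)
      ≤ ∫ x, (C₁/L)^2 * (2*(1+lam)^2 * h x^2 + 2*(x^2 * h x^2)) :=
    integral_mono hfint hG hw
  have step2 : (∫ x, (C₁/L)^2 * (2*(1+lam)^2 * h x^2 + 2*(x^2 * h x^2)))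
      = (C₁/L)^2 * (2*(1+lam)^2 * (∫ x, h x^2) + 2 * ∫ x, x^2 * h x^2) := by
    rw [integral_const_mul]
    congr 1
    rw [integral_add (hint.const_mul _) (hI2.const_mul 2), integral_const_mul,
      integral_const_mul]
  have step3 : (C₁/L)^2 * (2*(1+lam)^2 * (∫ x, h x^2) + 2 * ∫ x, x^2 * h x^2)
      ≤ (C₁/L)^2 * (2*(1+lam)^2 + 2*(lam^2 + K)) := by
    apply mul_le_mul_of_nonneg_left _ (sq_nonneg _)
    rw [hnorm]
    linarith
  have step4 : (C₁/L)^2 * (2*(1+lam)^2 + 2*(lam^2 + K))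
      ≤ (C₁ * (K+4) * lam / L)^2 := by
    have heq : (C₁ * (K+4) * lam / L)^2 = (C₁/L)^2 * ((K+4)*lam)^2 := by ring
    rw [heq]
    apply mul_le_mul_of_nonneg_left _ (sq_nonneg _)
    have hl2 : 1 ≤ lam^2 := by nlinarith
    nlinarith [sq_nonneg (lam-1), mul_le_mul_of_nonneg_left hl2 hK0, sq_nonneg K,
      mul_nonneg (mul_nonneg hK0 hK0) (sq_nonneg lam), mul_nonneg hK0 (sq_nonneg lam)]
  calc (∫ x, ((1+|x|) / (Real.log (2+|x|)) ^ δ' * h x)^2)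
      ≤ (C₁/L)^2 * (2*(1+lam)^2 + 2*(lam^2 + K)) := by
        rw [← step2] at step3
        exact le_trans step1 step3
  _ ≤ (C₁ * (K+4) * lam / L)^2 := step4
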